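/- arXiv:2011.01239 — 2 statements merged into one kernel-verified Lean document; each statement's English description precedes it below -/
import Mathlib

section
/- Let F be an involution ((-1)^F)² = 1 on a finite-dimensional complex Hilbert space that anticommutes with Q (and hence with Q†), where Q² = 0 and H = QQ† + Q†Q. Then for every eigenvalue E > 0 of H, the restriction of (-1)^F to the E-eigenspace of H has trace zero. -/
/-- If P = (-1)^F is a self-adjoint involution anticommuting with Q,
Q² = 0, H = QQ† + Q†Q, then for any eigenvalue E > 0 of H the trace of the
restriction of P to the E-eigenspace of H vanishes. -/
theorem susy_trace_parity_on_excited_eigenspace_zero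
    {V : Type*} [NormedAddCommGroup V] [InnerProductSpace ℂ V]
    [FiniteDimensional ℂ V] (Q P : V →ₗ[ℂ] V) (hQ2 : Q ∘ₗ Q = 0)
    (hP2 : P ∘ₗ P = LinearMap.id) (hPsa : LinearMap.adjoint P = P)
    (hPQ : P ∘ₗ Q = -(Q ∘ₗ P))
    (H : V →ₗ[ℂ] V)
    (hH : H = Q ∘ₗ LinearMap.adjoint Q + LinearMap.adjoint Q ∘ₗ Q)
    (E : ℝ) (hE : 0 < E)
    (hinv : ∀ x ∈ Module.End.eigenspace H (E : ℂ),
      P x ∈ Module.End.eigenspace H (E : ℂ)) :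
    LinearMap.trace ℂ (Module.End.eigenspace H (E : ℂ)) (P.restrict hinv) = 0 := by
  set Q' := LinearMap.adjoint Q with hQ'def
  have h2 : Q' ∘ₗ Q' = 0 := by
    rw [hQ'def, ← LinearMap.adjoint_comp, hQ2, map_zero]
  have hPQ' : P ∘ₗ Q' = -(Q' ∘ₗ P) := by
    have h := congrArg LinearMap.adjoint hPQ
    rw [LinearMap.adjoint_comp, hPsa, map_neg, LinearMap.adjoint_comp, hPsa] at h
    rw [← hQ'def] at h
    rw [← neg_eq_iff_eq_neg, ← h]
  set A := Q + Q' with hAdef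
  have hA2 : A ∘ₗ A = H := by
    rw [hH, hAdef]
    simp only [LinearMap.add_comp, LinearMap.comp_add, hQ2, h2, zero_add, add_zero]
    exact add_comm _ _
  have hcomm : H ∘ₗ A = A ∘ₗ H := by rw [← hA2, LinearMap.comp_assoc]
  have hAinv : ∀ x ∈ Module.End.eigenspace H (E : ℂ),
      A x ∈ Module.End.eigenspace H (E : ℂ) := by
    intro x hx
    rw [Module.End.mem_eigenspace_iff] at hx ⊢
    have : H (A x) = A (H x) := by
      rw [← LinearMap.comp_apply, hcomm, LinearMap.comp_apply]
    rw [this, hx, map_smul]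
  set W := Module.End.eigenspace H (E : ℂ) with hWdef
  set P' := P.restrict hinv with hP'def
  set A' := A.restrict hAinv with hA'def
  have hPA : P ∘ₗ A = -(A ∘ₗ P) := by
    rw [hAdef]
    simp only [LinearMap.comp_add, LinearMap.add_comp, hPQ, hPQ', neg_add]
  have hPA' : P' * A' = -(A' * P') := by
    apply LinearMap.ext
    intro x
    apply Subtype.ext
    have h := LinearMap.ext_iff.mp hPA (x : V)
    simp only [LinearMap.comp_apply, LinearMap.neg_apply] at h
    simp [hP'def, hA'def, LinearMap.restrict_apply, Module.End.mul_apply, h]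
  have hEne : (E : ℂ) ≠ 0 := by
    exact_mod_cast (Complex.ofReal_ne_zero).mpr (ne_of_gt hE)
  have hA'2 : A' * A' = (E : ℂ) • 1 := by
    apply LinearMap.ext
    intro x
    apply Subtype.ext
    have hx : H (x : V) = (E : ℂ) • (x : V) :=
      Module.End.mem_eigenspace_iff.mp x.2
    have : A (A (x : V)) = H (x : V) := by
      rw [← LinearMap.comp_apply, hA2]
    simp [hA'def, LinearMap.restrict_apply, Module.End.mul_apply, this, hx]
  set B := (E : ℂ)⁻¹ • A' with hBdef
  have hAB : A' * B = 1 := by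
    rw [hBdef, mul_smul_comm, hA'2, smul_smul, inv_mul_cancel₀ hEne, one_smul]
  have hBA : B * A' = 1 := by
    rw [hBdef, smul_mul_assoc, hA'2, smul_smul, inv_mul_cancel₀ hEne, one_smul]
  have key : LinearMap.trace ℂ W P' = -LinearMap.trace ℂ W P' := by
    calc LinearMap.trace ℂ W P'
        = LinearMap.trace ℂ W ((P' * A') * B) := by rw [mul_assoc, hAB, mul_one]
      _ = LinearMap.trace ℂ W ((-(A' * P')) * B) := by rw [hPA']
      _ = -LinearMap.trace ℂ W (A' * (P' * B)) := by rw [show -(A' * P') * B = -(A' * (P' * B)) by ext x; simp [Module.End.mul_apply], map_neg]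
      _ = -LinearMap.trace ℂ W ((P' * B) * A') := by rw [LinearMap.trace_mul_comm]
      _ = -LinearMap.trace ℂ W P' := by rw [mul_assoc, hBA, mul_one]
  linear_combination key / 2
end

section
/- Under the assumptions that P = (-1)^F is a self-adjoint involution anticommuting with Q, Q² = 0, and H = QQ† + Q†Q, the trace of P over the whole space equals the trace of the restriction of P to the kernel of H (the Witten index equals Tr (-1)^F). -/
/-- For P = (-1)^F a self-adjoint involution anticommuting with Q,
Q² = 0 and H = QQ† + Q†Q, the trace of P over the whole space equals the trace
of the restriction of P to ker H (the Witten index equals Tr (-1)^F). -/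
theorem witten_index_equals_trace_parity
    {V : Type*} [NormedAddCommGroup V] [InnerProductSpace ℂ V]
    [FiniteDimensional ℂ V] (Q P : V →ₗ[ℂ] V) (hQ2 : Q ∘ₗ Q = 0)
    (hP2 : P ∘ₗ P = LinearMap.id) (hPsa : LinearMap.adjoint P = P)
    (hPQ : P ∘ₗ Q = -(Q ∘ₗ P))
    (H : V →ₗ[ℂ] V)
    (hH : H = Q ∘ₗ LinearMap.adjoint Q + LinearMap.adjoint Q ∘ₗ Q)
    (hinv : ∀ x ∈ LinearMap.ker H, P x ∈ LinearMap.ker H) :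
    LinearMap.trace ℂ V P = LinearMap.trace ℂ (LinearMap.ker H) (P.restrict hinv) := by
  set A : V →ₗ[ℂ] V := Q + LinearMap.adjoint Q with hA
  have hAsa : LinearMap.adjoint A = A := by
    simp [hA, map_add, LinearMap.adjoint_adjoint, add_comm]
  have hQ2' : LinearMap.adjoint Q ∘ₗ LinearMap.adjoint Q = 0 := by
    rw [← LinearMap.adjoint_comp, hQ2, map_zero]
  have hA2 : A ∘ₗ A = H := by
    simp only [hA, hH, LinearMap.add_comp, LinearMap.comp_add, hQ2, hQ2']
    abel
  have hPQ' : P ∘ₗ LinearMap.adjoint Q = -(LinearMap.adjoint Q ∘ₗ P) := by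
    have h := congrArg LinearMap.adjoint hPQ
    rw [LinearMap.adjoint_comp, map_neg, LinearMap.adjoint_comp, hPsa] at h
    exact neg_eq_iff_eq_neg.mp h.symm
  have hPA : P ∘ₗ A = -(A ∘ₗ P) := by
    simp only [hA, LinearMap.comp_add, LinearMap.add_comp, hPQ, hPQ']
    abel
  -- ker H = ker A
  have hker : LinearMap.ker H = LinearMap.ker A := by
    ext x
    simp only [LinearMap.mem_ker]
    constructor
    · intro hx
      have h2 : inner ℂ x ((LinearMap.adjoint A) (A x)) = inner ℂ (A x) (A x) :=
        LinearMap.adjoint_inner_right A _ _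
      rw [hAsa] at h2
      have h3 : A (A x) = H x := by rw [← hA2]; rfl
      rw [h3, hx, inner_zero_right] at h2
      exact inner_self_eq_zero.mp h2.symm
    · intro hx
      have : H x = A (A x) := by rw [← hA2]; rfl
      rw [this, hx, map_zero]
  set K : Submodule ℂ V := LinearMap.ker H with hK
  set W : Submodule ℂ V := Kᗮ with hW
  have hC : IsCompl K W := K.isCompl_orthogonal_of_hasOrthogonalProjection
  -- P and A preserve W
  have hPW : ∀ x ∈ W, P x ∈ W := by
    intro x hx
    rw [hW, Submodule.mem_orthogonal]
    intro y hy
    have : inner ℂ y (P x) = inner ℂ (P y) x := by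
      conv_lhs => rw [← hPsa]
      rw [LinearMap.adjoint_inner_right]
    rw [this]
    exact (Submodule.mem_orthogonal K x).mp hx _ (hinv y hy)
  have hAK : ∀ x ∈ K, A x ∈ K := by
    intro x hx
    rw [hker] at hx ⊢
    rw [LinearMap.mem_ker] at hx ⊢
    rw [hx, map_zero]
  have hAW : ∀ x ∈ W, A x ∈ W := by
    intro x hx
    rw [hW, Submodule.mem_orthogonal]
    intro y hy
    have : inner ℂ y (A x) = inner ℂ (A y) x := by
      conv_lhs => rw [← hAsa]
      rw [LinearMap.adjoint_inner_right]
    rw [this]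
    exact (Submodule.mem_orthogonal K x).mp hx _ (hAK y hy)
  -- internal direct sum decomposition indexed by Bool
  set N : Bool → Submodule ℂ V := fun b => if b then K else W with hN
  have hNint : DirectSum.IsInternal N := by
    rw [DirectSum.isInternal_submodule_iff_isCompl N (i := true) (j := false)
      (by simp) (by ext b; cases b <;> simp)]
    exact hC
  have hf : ∀ b, Set.MapsTo P (N b) (N b) := by
    intro b
    cases b
    · exact fun x hx => hPW x hx
    · exact fun x hx => hinv x hx
  have htr := LinearMap.trace_eq_sum_trace_restrict hNint hf
  rw [Fintype.sum_bool] at htr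
  -- trace of P restricted to W is zero
  have hzero : LinearMap.trace ℂ (N false) (P.restrict (hf false)) = 0 := by
    set p : W →ₗ[ℂ] W := P.restrict (hf false) with hp
    set a : W →ₗ[ℂ] W := A.restrict (fun x hx => hAW x hx) with ha
    show LinearMap.trace ℂ W p = 0
    have hainj : Function.Injective a := by
      rw [← LinearMap.ker_eq_bot, LinearMap.ker_eq_bot']
      intro x hx
      have h1 : A (x : V) = 0 := by
        have := congrArg (Subtype.val) hx
        simpa [ha, LinearMap.restrict_apply] using this
      have h2 : (x : V) ∈ K := by rw [hker]; exact h1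
      have h3 : (x : V) ∈ K ⊓ W := ⟨h2, x.2⟩
      rw [hC.inf_eq_bot] at h3
      exact Subtype.ext h3
    have hasurj : Function.Surjective a :=
      (LinearMap.injective_iff_surjective).mp hainj
    set e : W ≃ₗ[ℂ] W := LinearEquiv.ofBijective a ⟨hainj, hasurj⟩ with he
    have hap : a ∘ₗ p = -(p ∘ₗ a) := by
      ext x
      have h := LinearMap.congr_fun hPA (x : V)
      simp only [LinearMap.coe_comp, Function.comp_apply, LinearMap.neg_apply] at h ⊢
      have e1 : ((a (p x)) : V) = A (P (x : V)) := by
        rfl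
      have e2 : ((p (a x)) : V) = P (A (x : V)) := by
        rfl
      rw [Submodule.coe_neg, e1, e2]
      exact neg_eq_iff_eq_neg.mp h.symm
    have hea : (e.symm.toLinearMap) ∘ₗ a = LinearMap.id := by
      ext x
      show ((e.symm (a x) : W) : V) = (x : V)
      exact congrArg Subtype.val (e.symm_apply_apply x)
    have hae : a ∘ₗ (e.symm.toLinearMap) = LinearMap.id := by
      ext x
      show ((a (e.symm x) : W) : V) = (x : V)
      rw [show a (e.symm x) = e (e.symm x) from rfl]
      exact congrArg Subtype.val (e.apply_symm_apply x)
    have key : LinearMap.trace ℂ W p = -(LinearMap.trace ℂ W p) := by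
      conv_lhs => rw [show p = e.symm.toLinearMap ∘ₗ (a ∘ₗ p) by
        rw [← LinearMap.comp_assoc, hea, LinearMap.id_comp]]
      rw [hap, LinearMap.comp_neg, map_neg]
      congr 1
      calc LinearMap.trace ℂ W (e.symm.toLinearMap ∘ₗ (p ∘ₗ a))
          = LinearMap.trace ℂ W ((e.symm.toLinearMap ∘ₗ p) ∘ₗ a) := by
            rw [LinearMap.comp_assoc]
        _ = LinearMap.trace ℂ W (a ∘ₗ (e.symm.toLinearMap ∘ₗ p)) :=
            LinearMap.trace_mul_comm ℂ _ _
        _ = LinearMap.trace ℂ W p := by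
            rw [← LinearMap.comp_assoc, hae, LinearMap.id_comp]
    linear_combination key / 2
  rw [htr, hzero, add_zero]
  rfl
end
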